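/- Let Y_1, …, Y_n be i.i.d. copies of a random vector Y ∈ ℝ^p with mean μ = EY and E‖Y‖² < ∞. Define Ω̃ = ( (1/n) Σ_{i=1}^n ((Y_i − μ)(Y_i − μ)ᵀ)^{1/2} )² and let S = cov_{d_S}(Y) = (E[((Y−μ)(Y−μ)ᵀ)^{1/2}])². Then E[d_S²(Ω̃, S)] ≤ E‖Y − μ‖² / n. -/

import Mathlib

open Matrix MeasureTheory ProbabilityTheory

noncomputable def eunorm {p : ℕ} (x : Fin p → ℝ) : ℝ := Real.sqrt (∑ i, x i ^ 2)

noncomputable def frob {p : ℕ} (M : Matrix (Fin p) (Fin p) ℝ) : ℝ :=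
  Real.sqrt (∑ i, ∑ j, M i j ^ 2)

open Classical in
noncomputable def msqrt {p : ℕ} (A : Matrix (Fin p) (Fin p) ℝ) : Matrix (Fin p) (Fin p) ℝ :=
  if h : A.PosSemidef then
    (h.1.eigenvectorUnitary.1 * diagonal ((↑) ∘ (√·) ∘ h.1.eigenvalues) *
      (star h.1.eigenvectorUnitary : Matrix (Fin p) (Fin p) ℝ)) else 0

noncomputable def dS {p : ℕ} (A B : Matrix (Fin p) (Fin p) ℝ) : ℝ := frob (msqrt A - msqrt B)

noncomputable def mExp {p : ℕ} {Ωs : Type*} [MeasurableSpace Ωs] (μ : Measure Ωs)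
    (F : Ωs → Matrix (Fin p) (Fin p) ℝ) : Matrix (Fin p) (Fin p) ℝ :=
  Matrix.of fun i j => ∫ ω, F ω i j ∂μ

noncomputable def covDS {p : ℕ} {Ωs : Type*} [MeasurableSpace Ωs] (μ : Measure Ωs)
    (Y : Ωs → Fin p → ℝ) : Matrix (Fin p) (Fin p) ℝ :=
  (mExp μ fun ω => msqrt (vecMulVec (Y ω - fun r => ∫ ω', Y ω' r ∂μ) (Y ω - fun r => ∫ ω', Y ω' r ∂μ))) *
  (mExp μ fun ω => msqrt (vecMulVec (Y ω - fun r => ∫ ω', Y ω' r ∂μ) (Y ω - fun r => ∫ ω', Y ω' r ∂μ)))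

/- ## Auxiliary lemmas -/

lemma eunorm_nonneg {p : ℕ} (v : Fin p → ℝ) : 0 ≤ eunorm v := Real.sqrt_nonneg _

lemma eunorm_sq {p : ℕ} (v : Fin p → ℝ) : eunorm v ^ 2 = ∑ i, v i ^ 2 :=
  Real.sq_sqrt (Finset.sum_nonneg fun _ _ => sq_nonneg _)

lemma eunorm_pos {p : ℕ} {v : Fin p → ℝ} (hv : v ≠ 0) : 0 < eunorm v := by
  rcases (eunorm_nonneg v).lt_or_eq with h | h
  · exact h
  · exfalso
    apply hv
    funext i
    have h2 : ∑ j, v j ^ 2 = 0 := by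
      have := eunorm_sq v
      rw [← h] at this
      simpa using this.symm
    have := (Finset.sum_eq_zero_iff_of_nonneg (fun j _ => sq_nonneg (v j))).1 h2 i
      (Finset.mem_univ i)
    exact sq_eq_zero_iff.mp this

lemma abs_le_eunorm {p : ℕ} (v : Fin p → ℝ) (i : Fin p) : |v i| ≤ eunorm v := by
  have h : v i ^ 2 ≤ ∑ j, v j ^ 2 :=
    Finset.single_le_sum (f := fun j => v j ^ 2) (fun j _ => sq_nonneg _) (Finset.mem_univ i)
  calc |v i| = Real.sqrt (v i ^ 2) := (Real.sqrt_sq_eq_abs _).symm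
  _ ≤ _ := Real.sqrt_le_sqrt h

lemma eunorm_eq_norm {p : ℕ} (v : Fin p → ℝ) :
    eunorm v = ‖(WithLp.equiv 2 (Fin p → ℝ)).symm v‖ := by
  rw [EuclideanSpace.norm_eq]
  simp [eunorm, sq_abs]

lemma eunorm_sub_le {p : ℕ} (a b : Fin p → ℝ) : eunorm (a - b) ≤ eunorm a + eunorm b := by
  simp only [eunorm_eq_norm]
  show ‖WithLp.toLp 2 (a - b)‖ ≤ ‖WithLp.toLp 2 a‖ + ‖WithLp.toLp 2 b‖
  rw [WithLp.toLp_sub]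
  exact norm_sub_le _ _

lemma posSemidef_vecMulVec {p : ℕ} (v : Fin p → ℝ) : (vecMulVec v v).PosSemidef := by
  refine Matrix.PosSemidef.of_dotProduct_mulVec_nonneg ?_ ?_
  · exact Matrix.ext fun i j => by
      simp [conjTranspose_apply, vecMulVec_apply, mul_comm]
  · intro x
    have hmv : vecMulVec v v *ᵥ x = fun i => v i * ∑ j, v j * x j := by
      funext i
      simp [mulVec, dotProduct, vecMulVec_apply, Finset.mul_sum, mul_assoc]
    rw [hmv]
    have : dotProduct (star x) (fun i => v i * ∑ j, v j * x j) = (∑ j, v j * x j) ^ 2 := by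
      simp only [dotProduct, star_trivial]
      rw [pow_two, Finset.sum_mul]
      exact Finset.sum_congr rfl fun i _ => by ring
    rw [this]
    positivity

lemma posSemidef_smul {p : ℕ} {A : Matrix (Fin p) (Fin p) ℝ} (hA : A.PosSemidef)
    {c : ℝ} (hc : 0 ≤ c) : (c • A).PosSemidef := by
  have hs : ∀ i j, A j i = A i j := fun i j => by
    conv_lhs => rw [← hA.1]
    simp [conjTranspose_apply]
  refine Matrix.PosSemidef.of_dotProduct_mulVec_nonneg ?_ ?_
  · exact Matrix.ext fun i j => by simp [conjTranspose_apply, hs i j]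
  · intro x
    rw [smul_mulVec, dotProduct_smul, smul_eq_mul]
    exact mul_nonneg hc (hA.dotProduct_mulVec_nonneg x)

lemma posSemidef_sum {p : ℕ} {ι : Type*} (s : Finset ι) (f : ι → Matrix (Fin p) (Fin p) ℝ)
    (h : ∀ i ∈ s, (f i).PosSemidef) : (∑ i ∈ s, f i).PosSemidef :=
  Finset.sum_induction f _ (fun _ _ ha hb => ha.add hb) Matrix.PosSemidef.zero h

open scoped MatrixOrder in
lemma msqrt_eq_sqrt {p : ℕ} {A : Matrix (Fin p) (Fin p) ℝ} (hA : A.PosSemidef) :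
    msqrt A = CFC.sqrt A := by
  rw [msqrt, dif_pos hA, CFC.sqrt_eq_cfc, cfc_nnreal_eq_real _ A, hA.1.cfc_eq]
  simp only [IsHermitian.cfc]
  congr 3
  funext i
  simp [max_eq_left (hA.eigenvalues_nonneg i)]

open scoped MatrixOrder in
lemma msqrt_mul_self {p : ℕ} {M : Matrix (Fin p) (Fin p) ℝ} (hM : M.PosSemidef) :
    msqrt (M * M) = M := by
  have h2 : (M * M).PosSemidef := by rw [← pow_two]; exact hM.pow 2
  rw [msqrt_eq_sqrt h2]
  exact CFC.sqrt_mul_self M hM.nonneg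

open scoped MatrixOrder in
lemma msqrt_vecMulVec {p : ℕ} (v : Fin p → ℝ) :
    msqrt (vecMulVec v v) = (eunorm v)⁻¹ • vecMulVec v v := by
  rcases eq_or_ne v 0 with rfl | hv
  · have h0 : vecMulVec (0 : Fin p → ℝ) (0 : Fin p → ℝ) = (0 : Matrix (Fin p) (Fin p) ℝ) := by
      ext i j; simp [vecMulVec_apply]
    rw [h0, smul_zero, msqrt_eq_sqrt Matrix.PosSemidef.zero]
    exact CFC.sqrt_zero
  · have hc : 0 < eunorm v := eunorm_pos hv
    have hV : (vecMulVec v v).PosSemidef := posSemidef_vecMulVec v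
    have hB : ((eunorm v)⁻¹ • vecMulVec v v).PosSemidef :=
      posSemidef_smul hV (inv_nonneg.2 hc.le)
    have hmul : vecMulVec v v * vecMulVec v v = (eunorm v ^ 2) • vecMulVec v v := by
      ext i j
      rw [Matrix.mul_apply]
      simp only [vecMulVec_apply, Matrix.smul_apply, smul_eq_mul, eunorm_sq]
      rw [Finset.sum_mul]
      exact Finset.sum_congr rfl fun k _ => by ring
    have hsq : ((eunorm v)⁻¹ • vecMulVec v v) ^ 2 = vecMulVec v v := by
      rw [smul_pow, show (vecMulVec v v) ^ 2 = vecMulVec v v * vecMulVec v v from pow_two _,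
        hmul, smul_smul, ← mul_pow, inv_mul_cancel₀ hc.ne', one_pow, one_smul]
    rw [msqrt_eq_sqrt hV]
    conv_lhs => rw [← hsq]
    exact CFC.sqrt_sq _ hB.nonneg

lemma sum_sq_g {p : ℕ} (v : Fin p → ℝ) :
    ∑ j, ∑ k, ((eunorm v)⁻¹ • vecMulVec v v) j k ^ 2 = eunorm v ^ 2 := by
  rcases eq_or_ne v 0 with rfl | hv
  · simp [vecMulVec_apply, eunorm]
  · have hc : 0 < eunorm v := eunorm_pos hv
    simp only [Matrix.smul_apply, vecMulVec_apply, smul_eq_mul, mul_pow]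
    have h1 : ∀ j : Fin p, ∑ k, ((eunorm v)⁻¹) ^ 2 * (v j ^ 2 * v k ^ 2)
        = ((eunorm v)⁻¹) ^ 2 * v j ^ 2 * ∑ k, v k ^ 2 := by
      intro j
      rw [Finset.mul_sum]
      exact Finset.sum_congr rfl fun k _ => by ring
    calc ∑ j, ∑ k, ((eunorm v)⁻¹) ^ 2 * (v j ^ 2 * v k ^ 2)
        = ∑ j, ((eunorm v)⁻¹) ^ 2 * v j ^ 2 * ∑ k, v k ^ 2 :=
          Finset.sum_congr rfl fun j _ => h1 j
      _ = ((eunorm v)⁻¹) ^ 2 * (∑ j, v j ^ 2) * ∑ k, v k ^ 2 := by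
          rw [← Finset.sum_mul, ← Finset.mul_sum]
      _ = eunorm v ^ 2 := by
          rw [← eunorm_sq, inv_pow, inv_mul_cancel₀ (pow_ne_zero _ hc.ne'), one_mul]

lemma abs_g_le {p : ℕ} (v : Fin p → ℝ) (j k : Fin p) :
    |((eunorm v)⁻¹ • vecMulVec v v) j k| ≤ eunorm v := by
  rcases eq_or_ne v 0 with rfl | hv
  · simp [vecMulVec_apply, eunorm_nonneg]
  · have hc : 0 < eunorm v := eunorm_pos hv
    simp only [Matrix.smul_apply, vecMulVec_apply, smul_eq_mul]
    rw [abs_mul, abs_mul, abs_inv, abs_of_pos hc]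
    calc (eunorm v)⁻¹ * (|v j| * |v k|) ≤ (eunorm v)⁻¹ * (eunorm v * eunorm v) := by
          have h1 := abs_le_eunorm v j
          have h2 := abs_le_eunorm v k
          have h4 := abs_nonneg (v k)
          have h5 : (0:ℝ) ≤ (eunorm v)⁻¹ := inv_nonneg.2 hc.le
          exact mul_le_mul_of_nonneg_left (mul_le_mul h1 h2 h4 (eunorm_nonneg v)) h5
      _ = eunorm v := by field_simp

/-- For i.i.d. copies `Y₁, …, Yₙ` of a random vector `Y ∈ ℝ^p` with mean `μ` and
`E‖Y‖² < ∞`, with `Ω̃ = ((1/n) Σᵢ ((Yᵢ−μ)(Yᵢ−μ)ᵀ)^{1/2})²` and `S = cov_{d_S}(Y)`, one has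
`E[d_S²(Ω̃, S)] ≤ E‖Y − μ‖² / n`. -/
theorem stmt8 {p : ℕ} {Ωs : Type*} [MeasurableSpace Ωs] (μ : Measure Ωs)
    [IsProbabilityMeasure μ] {n : ℕ} (hn : 0 < n) (Y : Fin n → Ωs → Fin p → ℝ)
    (hmeas : ∀ i, Measurable (Y i))
    (hindep : iIndepFun Y μ)
    (hid : ∀ i j, IdentDistrib (Y i) (Y j) μ μ)
    (hL2 : Integrable (fun ω => eunorm (Y ⟨0, hn⟩ ω) ^ 2) μ)
    (μv : Fin p → ℝ) (hμv : μv = fun r => ∫ ω, Y ⟨0, hn⟩ ω r ∂μ)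
    (S : Matrix (Fin p) (Fin p) ℝ) (hS : S = covDS μ (Y ⟨0, hn⟩)) :
    (∫ ω, dS
        (((n : ℝ)⁻¹ • ∑ i, msqrt (vecMulVec (Y i ω - μv) (Y i ω - μv))) *
         ((n : ℝ)⁻¹ • ∑ i, msqrt (vecMulVec (Y i ω - μv) (Y i ω - μv)))) S ^ 2 ∂μ) ≤
      (∫ ω, eunorm (Y ⟨0, hn⟩ ω - μv) ^ 2 ∂μ) / n := by
  classical
  subst hS
  have hn' : (n : ℝ) ≠ 0 := Nat.cast_ne_zero.2 hn.ne'
  set i0 : Fin n := ⟨0, hn⟩ with hi0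
  -- measurability of eunorm
  have heumeas : Measurable (fun v : Fin p → ℝ => eunorm v) :=
    Real.continuous_sqrt.measurable.comp
      (Finset.measurable_sum _ fun i _ => (measurable_pi_apply i).pow_const 2)
  -- entrywise functions
  set u : Fin p → Fin p → (Fin p → ℝ) → ℝ :=
    fun j k v => ((eunorm (v - μv))⁻¹ • vecMulVec (v - μv) (v - μv)) j k with hu
  have hsubm : Measurable (fun v : Fin p → ℝ => v - μv) :=
    measurable_id.sub measurable_const
  have hum : ∀ j k, Measurable (u j k) := by
    intro j k
    simp only [hu, Matrix.smul_apply, vecMulVec_apply, smul_eq_mul]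
    exact ((heumeas.comp hsubm).inv).mul
      (((measurable_pi_apply j).comp hsubm).mul ((measurable_pi_apply k).comp hsubm))
  set W : Fin p → Fin p → Fin n → Ωs → ℝ := fun j k i => u j k ∘ Y i with hW
  have hWm : ∀ j k i, Measurable (W j k i) := fun j k i => (hum j k).comp (hmeas i)
  have hWid : ∀ j k i, IdentDistrib (W j k i) (W j k i0) μ μ :=
    fun j k i => (hid i i0).comp (hum j k)
  have hWindep : ∀ j k, ∀ i i' : Fin n, i ≠ i' → IndepFun (W j k i) (W j k i') μ :=
    fun j k i i' hne => (hindep.indepFun hne).comp (hum j k) (hum j k)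
  -- integrability of eunorm (Y i0 - μv)^2
  have hZint : Integrable (fun ω => eunorm (Y i0 ω - μv) ^ 2) μ := by
    have hb : Integrable (fun ω => 2 * eunorm (Y i0 ω) ^ 2 + 2 * eunorm μv ^ 2) μ :=
      (hL2.const_mul 2).add (integrable_const _)
    refine hb.mono' ?_ (ae_of_all _ fun ω => ?_)
    · exact ((heumeas.comp ((hmeas i0).sub measurable_const)).pow_const 2).aestronglyMeasurable
    · rw [Real.norm_eq_abs, abs_of_nonneg (sq_nonneg _)]
      have h1 := eunorm_sub_le (Y i0 ω) μv
      have h2 := eunorm_nonneg (Y i0 ω - μv)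
      have h3 : eunorm (Y i0 ω - μv) ^ 2 ≤ (eunorm (Y i0 ω) + eunorm μv) ^ 2 :=
        pow_le_pow_left₀ h2 h1 2
      nlinarith [sq_nonneg (eunorm (Y i0 ω) - eunorm μv)]
  -- W is in L²
  have hWabs : ∀ j k i ω, W j k i ω ^ 2 ≤ eunorm (Y i ω - μv) ^ 2 := by
    intro j k i ω
    have h := abs_g_le (Y i ω - μv) j k
    calc W j k i ω ^ 2 = |W j k i ω| ^ 2 := (sq_abs _).symm
      _ ≤ eunorm (Y i ω - μv) ^ 2 := pow_le_pow_left₀ (abs_nonneg _) h 2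
  have hW2 : ∀ j k i, MemLp (W j k i) 2 μ := by
    intro j k i
    refine ((hWid j k i).memLp_iff).2 ?_
    refine (memLp_two_iff_integrable_sq (hWm j k i0).aestronglyMeasurable).2 ?_
    refine hZint.mono' ((hWm j k i0).pow_const 2).aestronglyMeasurable
      (ae_of_all _ fun ω => ?_)
    rw [Real.norm_eq_abs, abs_of_nonneg (sq_nonneg _)]
    exact hWabs j k i0 ω
  have hWint : ∀ j k i, Integrable (W j k i) μ :=
    fun j k i => (hW2 j k i).integrable one_le_two
  have hWsq_int : ∀ j k i, Integrable (fun ω => W j k i ω ^ 2) μ := fun j k i =>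
    (memLp_two_iff_integrable_sq (hWm j k i).aestronglyMeasurable).1 (hW2 j k i)
  -- the matrix A
  set A : Matrix (Fin p) (Fin p) ℝ := Matrix.of fun j k => ∫ ω, W j k i0 ω ∂μ with hA
  have hApsd : A.PosSemidef := by
    refine Matrix.PosSemidef.of_dotProduct_mulVec_nonneg ?_ ?_
    · apply Matrix.ext; intro j k
      show star (A k j) = A j k
      rw [star_trivial]
      show (∫ ω, W k j i0 ω ∂μ) = ∫ ω, W j k i0 ω ∂μ
      refine integral_congr_ae (ae_of_all _ fun ω => ?_)
      show u k j (Y i0 ω) = u j k (Y i0 ω)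
      simp only [hu, Matrix.smul_apply, vecMulVec_apply, smul_eq_mul]
      ring
    · intro x
      rw [star_trivial]
      have hint : ∀ j k : Fin p, Integrable (fun ω => x j * (W j k i0 ω * x k)) μ :=
        fun j k => ((hWint j k i0).mul_const (x k)).const_mul (x j)
      have hform : ∀ ω, (0:ℝ) ≤ ∑ j, ∑ k, x j * (W j k i0 ω * x k) := by
        intro ω
        have hpsd : (((eunorm (Y i0 ω - μv))⁻¹ •
            vecMulVec (Y i0 ω - μv) (Y i0 ω - μv))).PosSemidef :=
          posSemidef_smul (posSemidef_vecMulVec (Y i0 ω - μv))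
            (inv_nonneg.2 (eunorm_nonneg (Y i0 ω - μv)))
        have h2 := hpsd.dotProduct_mulVec_nonneg x
        rw [star_trivial] at h2
        have heq : dotProduct x (((eunorm (Y i0 ω - μv))⁻¹ •
            vecMulVec (Y i0 ω - μv) (Y i0 ω - μv)) *ᵥ x)
            = ∑ j, ∑ k, x j * (W j k i0 ω * x k) := by
          show (∑ j, x j * ∑ k, _ * x k) = _
          refine Finset.sum_congr rfl fun j _ => ?_
          rw [Finset.mul_sum]
          rfl
        rw [heq] at h2
        exact h2
      have hswap : dotProduct x (A *ᵥ x) = ∫ ω, ∑ j, ∑ k, x j * (W j k i0 ω * x k) ∂μ := by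
        rw [integral_finset_sum _ (fun j _ => integrable_finset_sum _ fun k _ => hint j k)]
        show (∑ j, x j * ∑ k, A j k * x k) = _
        refine Finset.sum_congr rfl fun j _ => ?_
        rw [integral_finset_sum _ (fun k _ => hint j k), Finset.mul_sum]
        refine Finset.sum_congr rfl fun k _ => ?_
        rw [integral_const_mul]
        congr 1
        show (∫ ω, W j k i0 ω ∂μ) * x k = ∫ ω, W j k i0 ω * x k ∂μ
        rw [integral_mul_const]
      rw [hswap]
      exact integral_nonneg hform
  -- covDS equals A * A
  have hSA : covDS μ (Y i0) = A * A := by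
    have hfac : (mExp μ fun ω => msqrt (vecMulVec (Y i0 ω - μv) (Y i0 ω - μv))) = A := by
      apply Matrix.ext; intro j k
      show (∫ ω, msqrt (vecMulVec (Y i0 ω - μv) (Y i0 ω - μv)) j k ∂μ) = ∫ ω, W j k i0 ω ∂μ
      refine integral_congr_ae (ae_of_all _ fun ω => ?_)
      simp only [msqrt_vecMulVec]
      rfl
    unfold covDS
    rw [← hμv, hfac]
  rw [hSA]
  -- the averaged variables
  set T : Fin p → Fin p → Ωs → ℝ := fun j k ω => (n : ℝ)⁻¹ * ∑ i, W j k i ω with hT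
  -- pointwise identification of the distance
  have hpoint : ∀ ω, dS
      (((n : ℝ)⁻¹ • ∑ i, msqrt (vecMulVec (Y i ω - μv) (Y i ω - μv))) *
       ((n : ℝ)⁻¹ • ∑ i, msqrt (vecMulVec (Y i ω - μv) (Y i ω - μv)))) (A * A) ^ 2
      = ∑ j, ∑ k, (T j k ω - A j k) ^ 2 := by
    intro ω
    set M : Matrix (Fin p) (Fin p) ℝ :=
      (n : ℝ)⁻¹ • ∑ i, ((eunorm (Y i ω - μv))⁻¹ • vecMulVec (Y i ω - μv) (Y i ω - μv)) with hM
    have hrwM : ((n : ℝ)⁻¹ • ∑ i : Fin n, msqrt (vecMulVec (Y i ω - μv) (Y i ω - μv))) = M := by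
      rw [hM]
      congr 1
      exact Finset.sum_congr rfl fun i _ => msqrt_vecMulVec _
    have hMpsd : M.PosSemidef :=
      posSemidef_smul (posSemidef_sum _ _ fun i _ =>
        posSemidef_smul (posSemidef_vecMulVec _) (inv_nonneg.2 (eunorm_nonneg _)))
        (inv_nonneg.2 (Nat.cast_nonneg n))
    rw [hrwM, dS, msqrt_mul_self hMpsd, msqrt_mul_self hApsd, frob,
      Real.sq_sqrt (by positivity)]
    refine Finset.sum_congr rfl fun j _ => Finset.sum_congr rfl fun k _ => ?_
    congr 1
    rw [Matrix.sub_apply, hM, Matrix.smul_apply, Matrix.sum_apply, smul_eq_mul, hT]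
    rfl
  -- integrability of the summands
  have hT2 : ∀ j k, MemLp (T j k) 2 μ := by
    intro j k
    have h1 : MemLp (∑ i, W j k i) 2 μ := memLp_finset_sum' _ fun i _ => hW2 j k i
    have h2 := h1.const_mul ((n : ℝ)⁻¹)
    have h3 : (fun x => (n : ℝ)⁻¹ * (∑ i, W j k i) x) = T j k := by
      funext ω
      simp [Finset.sum_apply, hT]
    rwa [h3] at h2
  have hTsub2 : ∀ j k, MemLp (fun ω => T j k ω - A j k) 2 μ :=
    fun j k => (hT2 j k).sub (memLp_const _)
  have hTsq_int : ∀ j k, Integrable (fun ω => (T j k ω - A j k) ^ 2) μ := fun j k =>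
    (memLp_two_iff_integrable_sq (hTsub2 j k).aestronglyMeasurable).1 (hTsub2 j k)
  -- mean of T
  have hmean : ∀ j k, ∫ ω, T j k ω ∂μ = A j k := by
    intro j k
    show (∫ ω, (n : ℝ)⁻¹ * ∑ i, W j k i ω ∂μ) = A j k
    rw [integral_const_mul, integral_finset_sum _ (fun i _ => hWint j k i)]
    rw [Finset.sum_congr rfl fun i _ => (hWid j k i).integral_eq]
    rw [Finset.sum_const, Finset.card_univ, Fintype.card_fin, nsmul_eq_mul,
      ← mul_assoc, inv_mul_cancel₀ hn', one_mul]
    rfl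
  -- the key per-entry bound
  have hnpos : (0:ℝ) < n := by exact_mod_cast hn
  have hkey : ∀ j k, ∫ ω, (T j k ω - A j k) ^ 2 ∂μ ≤ (∫ ω, W j k i0 ω ^ 2 ∂μ) / n := by
    intro j k
    have h1 : ∫ ω, (T j k ω - A j k) ^ 2 ∂μ = variance (T j k) μ := by
      have hv := variance_eq_integral (hT2 j k).aestronglyMeasurable.aemeasurable
      rw [hmean j k] at hv
      exact hv.symm
    have hTfun : T j k = ((n : ℝ)⁻¹) • ∑ i, W j k i := by
      funext ω
      simp [Finset.sum_apply, hT]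
    have h2 : variance (T j k) μ = ((n : ℝ)⁻¹) ^ 2 * variance (∑ i, W j k i) μ := by
      rw [hTfun, variance_smul]
    have h3 : variance (∑ i, W j k i) μ = ∑ i : Fin n, variance (W j k i) μ :=
      IndepFun.variance_sum (fun i _ => hW2 j k i)
        (fun i _ i' _ hne => hWindep j k i i' hne)
    have h4 : ∑ i : Fin n, variance (W j k i) μ = n * variance (W j k i0) μ := by
      rw [Finset.sum_congr rfl fun i _ => (hWid j k i).variance_eq]
      rw [Finset.sum_const, Finset.card_univ, Fintype.card_fin, nsmul_eq_mul]
    have h5 : variance (W j k i0) μ ≤ ∫ ω, W j k i0 ω ^ 2 ∂μ :=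
      variance_le_expectation_sq (hWm j k i0).aestronglyMeasurable
    rw [h1, h2, h3, h4]
    have h6 : ((n : ℝ)⁻¹) ^ 2 * ((n : ℝ) * variance (W j k i0) μ)
        = variance (W j k i0) μ / n := by
      field_simp
    rw [h6]
    exact div_le_div_of_nonneg_right h5 hnpos.le
  -- final assembly
  calc (∫ ω, dS
        (((n : ℝ)⁻¹ • ∑ i, msqrt (vecMulVec (Y i ω - μv) (Y i ω - μv))) *
         ((n : ℝ)⁻¹ • ∑ i, msqrt (vecMulVec (Y i ω - μv) (Y i ω - μv)))) (A * A) ^ 2 ∂μ)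
      = ∫ ω, ∑ j, ∑ k, (T j k ω - A j k) ^ 2 ∂μ :=
        integral_congr_ae (ae_of_all _ hpoint)
    _ = ∑ j, ∑ k, ∫ ω, (T j k ω - A j k) ^ 2 ∂μ := by
        rw [integral_finset_sum _ (fun j _ => integrable_finset_sum _ fun k _ => hTsq_int j k)]
        exact Finset.sum_congr rfl fun j _ => integral_finset_sum _ fun k _ => hTsq_int j k
    _ ≤ ∑ j, ∑ k, (∫ ω, W j k i0 ω ^ 2 ∂μ) / n :=
        Finset.sum_le_sum fun j _ => Finset.sum_le_sum fun k _ => hkey j k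
    _ = (∑ j, ∑ k, ∫ ω, W j k i0 ω ^ 2 ∂μ) / n := by
        simp_rw [← Finset.sum_div]
    _ = (∫ ω, ∑ j, ∑ k, W j k i0 ω ^ 2 ∂μ) / n := by
        congr 1
        rw [integral_finset_sum _ (fun j _ => integrable_finset_sum _ fun k _ => hWsq_int j k i0)]
        exact Finset.sum_congr rfl fun j _ =>
          (integral_finset_sum _ fun k _ => hWsq_int j k i0).symm
    _ = (∫ ω, eunorm (Y i0 ω - μv) ^ 2 ∂μ) / n := by
        congr 1
        refine integral_congr_ae (ae_of_all _ fun ω => ?_)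
        exact sum_sq_g (Y i0 ω - μv)
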